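/- If u is absolutely continuous and nondecreasing on an interval [a,b] ⊆ [0,T] and the play output satisfies w(a) = u(a) - ρ, then w(t) = u(t) - ρ for all t ∈ [a,b]. -/

import Mathlib

open MeasureTheory Set Filter

/-- `f` is absolutely continuous on `[0,T]`: it is the integral of an integrable function. -/
def AbsContOn (T : ℝ) (f : ℝ → ℝ) : Prop :=
  ∃ f' : ℝ → ℝ, MeasureTheory.IntegrableOn f' (Set.Icc 0 T) ∧
    ∀ t ∈ Set.Icc (0:ℝ) T, f t = f 0 + ∫ s in Set.Ioc (0:ℝ) t, f' s

/-- `w` is the output of the scalar play operator with parameter `ρ` on `[0,T]`,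
applied to the input `u` with initial state `w₀`, characterized by the
variational inequality: `w` is absolutely continuous, `w 0 = w₀`,
`|u - w| ≤ ρ` on `[0,T]`, and `w' (u - w - v) ≥ 0` a.e. for all `|v| ≤ ρ`. -/
def IsPlayOutput (ρ T : ℝ) (u : ℝ → ℝ) (w₀ : ℝ) (w : ℝ → ℝ) : Prop :=
  w 0 = w₀ ∧
  ∃ w' : ℝ → ℝ, MeasureTheory.IntegrableOn w' (Set.Icc 0 T) ∧
    (∀ t ∈ Set.Icc (0:ℝ) T, w t = w₀ + ∫ s in Set.Ioc (0:ℝ) t, w' s) ∧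
    (∀ t ∈ Set.Icc (0:ℝ) T, |u t - w t| ≤ ρ) ∧
    (∀ᵐ t ∂(MeasureTheory.volume.restrict (Set.Icc (0:ℝ) T)),
      ∀ v : ℝ, |v| ≤ ρ → 0 ≤ w' t * (u t - w t - v))

/-- If the input `u` is nondecreasing on `[a,b] ⊆ [0,T]` and the play output starts on the
lower boundary `w a = u a - ρ`, then the output follows the boundary: `w = u - ρ` on `[a,b]`. -/
theorem play_boundary_follow (ρ T : ℝ) (hρ : 0 < ρ) (hT : 0 ≤ T)
    (u : ℝ → ℝ) (hu : AbsContOn T u) (w₀ : ℝ) (hw₀ : |w₀ - u 0| ≤ ρ)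
    (w : ℝ → ℝ) (hw : IsPlayOutput ρ T u w₀ w)
    (a b : ℝ) (ha : 0 ≤ a) (hab : a ≤ b) (hbT : b ≤ T)
    (hmono : MonotoneOn u (Set.Icc a b))
    (hstart : w a = u a - ρ) :
    ∀ t ∈ Set.Icc a b, w t = u t - ρ := by
  obtain ⟨hw0, w', hw'int, hwrep, hbound, hvar⟩ := hw
  obtain ⟨u', hu'int, hurep⟩ := hu
  have hsub : Icc a b ⊆ Icc (0:ℝ) T := Icc_subset_Icc ha hbT
  -- continuity of w and u on [0,T]
  have hwc : ContinuousOn w (Icc 0 T) :=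
    (continuousOn_const.add (intervalIntegral.continuousOn_primitive hw'int)).congr hwrep
  have huc : ContinuousOn u (Icc 0 T) := by
    refine (continuousOn_const.add (intervalIntegral.continuousOn_primitive hu'int)).congr hurep
  -- h t := w t - u t + ρ is nonneg on [a,b]
  have hnn : ∀ t ∈ Icc a b, 0 ≤ w t - u t + ρ := by
    intro t ht
    have := (abs_le.mp (hbound t (hsub ht))).2
    linarith
  intro t₀ ht₀
  by_contra hne
  have hpos0 : 0 < w t₀ - u t₀ + ρ := by
    rcases lt_or_eq_of_le (hnn t₀ ht₀) with h | h
    · exact h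
    · exact absurd (by linarith : w t₀ = u t₀ - ρ) hne
  -- the set where h = 0 on [a, t₀]
  set S : Set ℝ := Icc a t₀ ∩ (fun t => w t - u t + ρ) ⁻¹' {0} with hS_def
  have hat₀ : a ≤ t₀ := ht₀.1
  have haS : a ∈ S := by
    constructor
    · exact ⟨le_refl a, hat₀⟩
    · simp only [mem_preimage, mem_singleton_iff]
      rw [hstart]; ring
  have hIccsub : Icc a t₀ ⊆ Icc a b := Icc_subset_Icc le_rfl ht₀.2
  have hcontS : ContinuousOn (fun t => w t - u t + ρ) (Icc a t₀) :=
    (((hwc.mono (hIccsub.trans hsub)).sub (huc.mono (hIccsub.trans hsub))).add continuousOn_const)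
  have hSclosed : IsClosed S :=
    hcontS.preimage_isClosed_of_isClosed isClosed_Icc isClosed_singleton
  have hScompact : IsCompact S :=
    isCompact_Icc.of_isClosed_subset hSclosed inter_subset_left
  set s := sSup S with hs_def
  have hsS : s ∈ S := hScompact.sSup_mem ⟨a, haS⟩
  have hs0 : w s - u s + ρ = 0 := hsS.2
  have hst₀ : s < t₀ := by
    rcases lt_or_eq_of_le hsS.1.2 with h | h
    · exact h
    · rw [h] at hs0; linarith
  have hsab : s ∈ Icc a b := hIccsub hsS.1
  -- on (s, t₀], h > 0
  have hhpos : ∀ t ∈ Ioc s t₀, 0 < w t - u t + ρ := by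
    intro t ht
    have htab : t ∈ Icc a b := hIccsub ⟨hsS.1.1.trans ht.1.le, ht.2⟩
    rcases lt_or_eq_of_le (hnn t htab) with h | h
    · exact h
    · exfalso
      have : t ∈ S := ⟨⟨hsS.1.1.trans ht.1.le, ht.2⟩, by
        simp only [mem_preimage, mem_singleton_iff]; linarith⟩
      exact absurd (le_csSup hScompact.bddAbove this) (not_le.mpr ht.1)
  have hIocsub : Ioc s t₀ ⊆ Icc (0:ℝ) T := fun t ht =>
    ⟨ha.trans (hsS.1.1.trans ht.1.le), ht.2.trans (ht₀.2.trans hbT)⟩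
  -- a.e. on (s,t₀], w' ≤ 0
  have hae : ∀ᵐ t ∂(volume.restrict (Ioc s t₀)), w' t ≤ 0 := by
    have h1 := ae_restrict_of_ae_restrict_of_subset hIocsub hvar
    have h2 : ∀ᵐ t ∂(volume.restrict (Ioc s t₀)), t ∈ Ioc s t₀ :=
      ae_restrict_mem measurableSet_Ioc
    filter_upwards [h1, h2] with t hv ht
    have h3 := hv ρ (by rw [abs_of_pos hρ])
    have h4 := hhpos t ht
    nlinarith
  have hint : ∫ t in Ioc s t₀, w' t ≤ 0 := integral_nonpos_of_ae hae
  -- split the integral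
  have h0s : (0:ℝ) ≤ s := ha.trans hsS.1.1
  have hsplit : ∫ t in Ioc 0 t₀, w' t = (∫ t in Ioc 0 s, w' t) + ∫ t in Ioc s t₀, w' t := by
    have h1 : IntegrableOn w' (Ioc 0 s) := hw'int.mono_set
      (fun t ht => ⟨ht.1.le, ht.2.trans (hst₀.le.trans (ht₀.2.trans hbT))⟩)
    have h2 : IntegrableOn w' (Ioc s t₀) := hw'int.mono_set hIocsub
    have := setIntegral_union (μ := volume) (f := w') (s := Ioc 0 s) (t := Ioc s t₀)
      (Ioc_disjoint_Ioc_of_le le_rfl) measurableSet_Ioc h1 h2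
    rwa [Ioc_union_Ioc_eq_Ioc h0s hst₀.le] at this
  have hwt₀ := hwrep t₀ (hsub ht₀)
  have hws := hwrep s (hsub hsab)
  have hwle : w t₀ ≤ w s := by
    rw [hwt₀, hws, hsplit]; linarith
  have hmle : u s ≤ u t₀ := hmono hsab ht₀ hst₀.le
  linarith
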